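/- arXiv:1910.05990 — 3 statements merged into one kernel-verified Lean document; each statement's English description precedes it below -/
import Mathlib

section
/- If α > nt/2, then the average-power constraint is inactive: C_H(A, αA) = C_H(A, (nt/2)A). -/
open MeasureTheory ProbabilityTheory Matrix Filter Topology
open scoped ENNReal NNReal BigOperators

noncomputable section

namespace MimoOptical

variable {nt nr : ℕ}

/-- The law of a standard Gaussian vector `Z ~ N(0, I_n)` on `ℝ^n`. -/
def stdGaussian (n : ℕ) : Measure (Fin n → ℝ) :=
  Measure.pi fun _ => gaussianReal 0 1

/-- Real-valued Kullback–Leibler divergence `∫ log (dμ/dν) dμ`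
(with junk value if not absolutely continuous or not integrable). -/
def klDivR {Ω : Type*} [MeasurableSpace Ω] (μ ν : Measure Ω) : ℝ :=
  ∫ ω, Real.log (μ.rnDeriv ν ω).toReal ∂μ

/-- Mutual information of a joint law on a product space: the KL divergence between
the joint law and the product of its marginals. -/
def mutualInfoJoint {β γ : Type*} [MeasurableSpace β] [MeasurableSpace γ]
    (π : Measure (β × γ)) : ℝ :=
  klDivR π ((π.map Prod.fst).prod (π.map Prod.snd))

/-- Joint law of `(X, H X + Z)` where `X ~ μ` and `Z ~ N(0, I_nr)` is independent of `X`. -/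
def jointLaw (H : Matrix (Fin nr) (Fin nt) ℝ) (μ : Measure (Fin nt → ℝ)) :
    Measure ((Fin nt → ℝ) × (Fin nr → ℝ)) :=
  (μ.prod (stdGaussian nr)).map (fun p => (p.1, H.mulVec p.1 + p.2))

/-- An admissible input distribution: a probability measure on `[0, A]^nt`
with average power `E[‖X‖₁] ≤ avg`. -/
def Admissible (nt : ℕ) (A avg : ℝ) (μ : Measure (Fin nt → ℝ)) : Prop :=
  IsProbabilityMeasure μ ∧ (∀ᵐ x ∂μ, ∀ k, x k ∈ Set.Icc (0 : ℝ) A) ∧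
    (∫ x, ∑ k, |x k| ∂μ) ≤ avg

/-- Capacity of the MIMO optical intensity channel with peak power `A` and
average power `avg`. -/
def capacity (H : Matrix (Fin nr) (Fin nt) ℝ) (A avg : ℝ) : ℝ :=
  sSup { c | ∃ μ : Measure (Fin nt → ℝ),
    Admissible nt A avg μ ∧ c = mutualInfoJoint (jointLaw H μ) }

/-- The zonotope `R(M) = { M λ : λ ∈ [0,A]^k }`. -/
def zonotope {n k : ℕ} (M : Matrix (Fin n) (Fin k) ℝ) (A : ℝ) : Set (Fin n → ℝ) :=
  { x | ∃ lam : Fin k → ℝ, (∀ i, lam i ∈ Set.Icc 0 A) ∧ x = M.mulVec lam }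

/-- The collection `𝒰` of `nr`-element subsets of columns that are linearly independent. -/
def goodSets (H : Matrix (Fin nr) (Fin nt) ℝ) : Set (Finset (Fin nt)) :=
  { U | U.card = nr ∧ LinearIndependent ℝ (fun j : {x // x ∈ U} => fun i => H i j.1) }

/-- The square matrix `H_U` whose columns are the columns of `H` indexed by `U`
(junk value, the identity, if `U.card ≠ nr`). -/
def HU (H : Matrix (Fin nr) (Fin nt) ℝ) (U : Finset (Fin nt)) :
    Matrix (Fin nr) (Fin nr) ℝ :=
  if h : U.card = nr then H.submatrix id (fun i => U.orderEmbOfFin h i) else 1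

/-- `a_{U,j} = 1ᵀ H_U⁻¹ h_j`. -/
def aUj (H : Matrix (Fin nr) (Fin nt) ℝ) (U : Finset (Fin nt)) (j : Fin nt) : ℝ :=
  ∑ i, ((HU H U)⁻¹).mulVec (fun r => H r j) i

/-- `g_{U,j} = 1` if `a_{U,j} > 1` and `0` otherwise. -/
def gUj (H : Matrix (Fin nr) (Fin nt) ℝ) (U : Finset (Fin nt)) (j : Fin nt) : ℝ :=
  if 1 < aUj H U j then 1 else 0

/-- `s_U = Σ_{j ∈ Uᶜ} g_{U,j}`. -/
def sU (H : Matrix (Fin nr) (Fin nt) ℝ) (U : Finset (Fin nt)) : ℝ :=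
  ∑ j ∈ Uᶜ, gUj H U j

/-- `v_U = A Σ_{j ∈ Uᶜ} g_{U,j} h_j`. -/
def vU (H : Matrix (Fin nr) (Fin nt) ℝ) (A : ℝ) (U : Finset (Fin nt)) : Fin nr → ℝ :=
  fun r => A * ∑ j ∈ Uᶜ, gUj H U j * H r j

/-- The parallelepiped `D_U = R(H_U)`. -/
def DU (H : Matrix (Fin nr) (Fin nt) ℝ) (A : ℝ) (U : Finset (Fin nt)) :
    Set (Fin nr → ℝ) :=
  zonotope (HU H U) A

/-- The shifted parallelepiped `v_U + D_U`. -/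
def cell (H : Matrix (Fin nr) (Fin nt) ℝ) (A : ℝ) (U : Finset (Fin nt)) :
    Set (Fin nr → ℝ) :=
  (fun d => vU H A U + d) '' DU H A U

/-- `V_H = Σ_{U ∈ 𝒰} |det H_U|`. -/
def VH (H : Matrix (Fin nr) (Fin nt) ℝ) : ℝ :=
  ∑ᶠ U ∈ goodSets H, |(HU H U).det|

/-- `q_U = |det H_U| / V_H`. -/
def qU (H : Matrix (Fin nr) (Fin nt) ℝ) (U : Finset (Fin nt)) : ℝ :=
  |(HU H U).det| / VH H

/-- `α_th = nr/2 + Σ_{U ∈ 𝒰} s_U q_U`. -/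
def alphaTh (H : Matrix (Fin nr) (Fin nt) ℝ) : ℝ :=
  (nr : ℝ) / 2 + ∑ᶠ U ∈ goodSets H, sU H U * qU H U

/-- A probability vector on `𝒰`. -/
def ProbVec (H : Matrix (Fin nr) (Fin nt) ℝ) (p : Finset (Fin nt) → ℝ) : Prop :=
  (∀ U, 0 ≤ p U) ∧ (∀ U, U ∉ goodSets H → p U = 0) ∧ (∑ᶠ U ∈ goodSets H, p U) = 1

/-- Kullback–Leibler divergence `D(p‖q)` between probability vectors on `𝒰`. -/
def Dkl (H : Matrix (Fin nr) (Fin nt) ℝ) (p q : Finset (Fin nt) → ℝ) : ℝ :=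
  ∑ᶠ U ∈ goodSets H, p U * Real.log (p U / q U)

/-- `σ_{U,ℓ}`: square root of the `ℓ`-th diagonal entry of `H_U⁻¹ (H_U⁻¹)ᵀ`. -/
def sigmaUl (H : Matrix (Fin nr) (Fin nt) ℝ) (U : Finset (Fin nt)) (ℓ : Fin nr) : ℝ :=
  Real.sqrt ((((HU H U)⁻¹) * ((HU H U)⁻¹)ᵀ) ℓ ℓ)

/-- The trace of the covariance matrix of `X̄ = H X` when `X ~ μ`. -/
def traceCov (H : Matrix (Fin nr) (Fin nt) ℝ) (μ : Measure (Fin nt → ℝ)) : ℝ :=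
  ∑ i, ((∫ x, (H.mulVec x i) ^ 2 ∂μ) - (∫ x, H.mulVec x i ∂μ) ^ 2)

/-- The Gaussian Q-function. -/
def Qf (x : ℝ) : ℝ :=
  ∫ t in Set.Ioi x, Real.exp (-t ^ 2 / 2) / Real.sqrt (2 * Real.pi)

/-- The high-SNR penalty `ν` due to the average-power constraint. -/
def nuVal (H : Matrix (Fin nr) (Fin nt) ℝ) (α : ℝ) : ℝ :=
  sSup { y | ∃ lam mu : ℝ,
    lam ∈ Set.Ioo (max 0 ((nr : ℝ) / 2 + α - alphaTh H)) (min ((nr : ℝ) / 2) α) ∧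
    0 < mu ∧
    1 / mu - Real.exp (-mu) / (1 - Real.exp (-mu)) = lam / (nr : ℝ) ∧
    y = (nr : ℝ) * (1 - Real.log (mu / (1 - Real.exp (-mu)))
          - mu * Real.exp (-mu) / (1 - Real.exp (-mu)))
        - sInf { d | ∃ p : Finset (Fin nt) → ℝ, ProbVec H p ∧
            (∑ᶠ U ∈ goodSets H, p U * sU H U) = α - lam ∧ d = Dkl H p (qU H) } }

/-! ### Auxiliary lemmas for Statement 0 -/

section Aux

lemma measurable_mulVecFun (H : Matrix (Fin nr) (Fin nt) ℝ) :
    Measurable fun x : Fin nt → ℝ => H.mulVec x := by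
  refine measurable_pi_lambda _ fun i => ?_
  simp only [Matrix.mulVec, dotProduct]
  exact Finset.measurable_sum Finset.univ fun j _ => by fun_prop

instance stdGaussian_isProbabilityMeasure (n : ℕ) :
    IsProbabilityMeasure (stdGaussian n) := by
  unfold stdGaussian; infer_instance

lemma gaussianReal_map_neg : (gaussianReal 0 1).map (fun x : ℝ => -x) = gaussianReal 0 1 := by
  have h := gaussianReal_map_const_mul (μ := 0) (v := 1) (-1)
  have h1 : (⟨(-1 : ℝ) ^ 2, sq_nonneg _⟩ : ℝ≥0) = 1 := by ext; norm_num
  have h2 : (fun x : ℝ => -x) = (fun x : ℝ => (-1 : ℝ) * x) := by funext x; ring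
  rw [h2, h]
  congr 1
  · norm_num
  · ext; simp

lemma stdGaussian_map_neg (n : ℕ) :
    (stdGaussian n).map (fun z : Fin n → ℝ => -z) = stdGaussian n := by
  unfold stdGaussian
  have := MeasureTheory.measurePreserving_pi (fun _ : Fin n => gaussianReal 0 1)
    (fun _ : Fin n => gaussianReal 0 1) (fun _ => ⟨measurable_neg, gaussianReal_map_neg⟩)
  exact this.map_eq

lemma pi_absCont {n : ℕ} : ∀ (μ ν : Fin n → Measure ℝ), (∀ i, SigmaFinite (μ i)) →
    (∀ i, SigmaFinite (ν i)) → (∀ i, μ i ≪ ν i) → Measure.pi μ ≪ Measure.pi ν := by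
  induction n with
  | zero =>
    intro μ ν _ _ _
    rw [Measure.pi_of_empty μ, Measure.pi_of_empty ν]
  | succ m ih =>
    intro μ ν hμs hνs h
    haveI := hμs; haveI := hνs
    have h1 := MeasureTheory.measurePreserving_piFinSuccAbove μ 0
    have h2 := MeasureTheory.measurePreserving_piFinSuccAbove ν 0
    set e := MeasurableEquiv.piFinSuccAbove (fun _ : Fin (m + 1) => ℝ) 0 with he
    have hμ : Measure.pi μ
        = ((μ 0).prod (Measure.pi fun j => μ (Fin.succAbove 0 j))).map e.symm :=
      (h1.symm e).map_eq.symm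
    have hν : Measure.pi ν
        = ((ν 0).prod (Measure.pi fun j => ν (Fin.succAbove 0 j))).map e.symm :=
      (h2.symm e).map_eq.symm
    rw [hμ, hν]
    exact ((h 0).prod (ih _ _ (fun j => hμs _) (fun j => hνs _)
      (fun j => h _))).map e.symm.measurable

lemma volume_absCont_stdGaussian (n : ℕ) :
    (volume : Measure (Fin n → ℝ)) ≪ stdGaussian n := by
  rw [stdGaussian, MeasureTheory.volume_pi]
  refine pi_absCont _ _ (fun _ => inferInstance) (fun _ => inferInstance) fun i => ?_
  rw [gaussianReal_of_var_ne_zero 0 one_ne_zero]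
  exact withDensity_absolutelyContinuous' (measurable_gaussianPDF 0 1).aemeasurable
    (Filter.Eventually.of_forall fun x => (gaussianPDF_pos 0 one_ne_zero x).ne')

lemma stdGaussian_absCont_volume (n : ℕ) :
    stdGaussian n ≪ (volume : Measure (Fin n → ℝ)) := by
  rw [stdGaussian, MeasureTheory.volume_pi]
  refine pi_absCont _ _ (fun _ => inferInstance) (fun _ => inferInstance) fun i => ?_
  rw [gaussianReal_of_var_ne_zero 0 one_ne_zero]
  exact withDensity_absolutelyContinuous _ _

lemma volume_absCont_stdGaussian_add (n : ℕ) (v : Fin n → ℝ) :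
    (volume : Measure (Fin n → ℝ)) ≪ (stdGaussian n).map (fun z => v + z) := by
  have h1 : (volume : Measure (Fin n → ℝ)).map (fun z => v + z) = volume :=
    MeasureTheory.map_add_left_eq_self volume v
  calc (volume : Measure (Fin n → ℝ)) = volume.map (fun z => v + z) := h1.symm
    _ ≪ (stdGaussian n).map (fun z => v + z) :=
      (volume_absCont_stdGaussian n).map (measurable_const_add v)

lemma stdGaussian_add_absCont_volume (n : ℕ) (v : Fin n → ℝ) :
    (stdGaussian n).map (fun z => v + z) ≪ (volume : Measure (Fin n → ℝ)) := by
  have h1 : (volume : Measure (Fin n → ℝ)).map (fun z => v + z) = volume :=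
    MeasureTheory.map_add_left_eq_self volume v
  calc (stdGaussian n).map (fun z => v + z)
      ≪ (volume : Measure (Fin n → ℝ)).map (fun z => v + z) :=
        (stdGaussian_absCont_volume n).map (measurable_const_add v)
    _ = volume := h1

lemma measurable_jointMap (H : Matrix (Fin nr) (Fin nt) ℝ) :
    Measurable fun p : (Fin nt → ℝ) × (Fin nr → ℝ) => (p.1, H.mulVec p.1 + p.2) :=
  measurable_fst.prodMk (((measurable_mulVecFun H).comp measurable_fst).add measurable_snd)

instance jointLaw_isProbabilityMeasure (H : Matrix (Fin nr) (Fin nt) ℝ)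
    (μ : Measure (Fin nt → ℝ)) [IsProbabilityMeasure μ] :
    IsProbabilityMeasure (jointLaw H μ) := by
  rw [jointLaw]
  exact Measure.isProbabilityMeasure_map (measurable_jointMap H).aemeasurable

lemma jointLaw_map_fst (H : Matrix (Fin nr) (Fin nt) ℝ) (μ : Measure (Fin nt → ℝ))
    [IsProbabilityMeasure μ] : (jointLaw H μ).map Prod.fst = μ := by
  rw [jointLaw, Measure.map_map measurable_fst (measurable_jointMap H)]
  have : (Prod.fst ∘ fun p : (Fin nt → ℝ) × (Fin nr → ℝ) => (p.1, H.mulVec p.1 + p.2))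
      = Prod.fst := rfl
  rw [this, Measure.map_fst_prod, measure_univ, one_smul]

lemma volume_absCont_PY (H : Matrix (Fin nr) (Fin nt) ℝ) (μ : Measure (Fin nt → ℝ))
    [IsProbabilityMeasure μ] :
    (volume : Measure (Fin nr → ℝ)) ≪ (jointLaw H μ).map Prod.snd := by
  have hq : Measurable fun p : (Fin nt → ℝ) × (Fin nr → ℝ) => H.mulVec p.1 + p.2 :=
    ((measurable_mulVecFun H).comp measurable_fst).add measurable_snd
  have hPY : (jointLaw H μ).map Prod.snd
      = (μ.prod (stdGaussian nr)).map (fun p => H.mulVec p.1 + p.2) := by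
    rw [jointLaw, Measure.map_map measurable_snd (measurable_jointMap H)]
    rfl
  refine Measure.AbsolutelyContinuous.mk fun S hS hS0 => ?_
  rw [hPY, Measure.map_apply hq hS] at hS0
  have h2 := Measure.measure_ae_null_of_prod_null hS0
  haveI : (ae μ).NeBot := ae_neBot.mpr (IsProbabilityMeasure.ne_zero μ)
  obtain ⟨x, hx⟩ := h2.exists
  have hset : Prod.mk x ⁻¹' ((fun p : (Fin nt → ℝ) × (Fin nr → ℝ) =>
      H.mulVec p.1 + p.2) ⁻¹' S) = (fun z => H.mulVec x + z) ⁻¹' S := rfl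
  have h3 : (stdGaussian nr).map (fun z => H.mulVec x + z) S = 0 := by
    rw [Measure.map_apply (measurable_const_add _) hS, ← hset]
    simpa using hx
  exact volume_absCont_stdGaussian_add nr (H.mulVec x) h3

lemma jointLaw_absCont (H : Matrix (Fin nr) (Fin nt) ℝ) (μ : Measure (Fin nt → ℝ))
    [IsProbabilityMeasure μ] :
    jointLaw H μ ≪ ((jointLaw H μ).map Prod.fst).prod ((jointLaw H μ).map Prod.snd) := by
  haveI : IsProbabilityMeasure ((jointLaw H μ).map Prod.snd) :=
    Measure.isProbabilityMeasure_map measurable_snd.aemeasurable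
  refine Measure.AbsolutelyContinuous.mk fun S hS hS0 => ?_
  rw [jointLaw_map_fst] at hS0
  have h2 := Measure.measure_ae_null_of_prod_null hS0
  rw [jointLaw, Measure.map_apply (measurable_jointMap H) hS,
    Measure.prod_apply ((measurable_jointMap H) hS)]
  have h0 : (fun x => (stdGaussian nr) (Prod.mk x ⁻¹' ((fun p : (Fin nt → ℝ) × (Fin nr → ℝ) =>
      (p.1, H.mulVec p.1 + p.2)) ⁻¹' S))) =ᵐ[μ] 0 := by
    filter_upwards [h2] with x hx
    simp only [Pi.zero_apply] at hx ⊢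
    have h3 : (volume : Measure (Fin nr → ℝ)) (Prod.mk x ⁻¹' S) = 0 :=
      volume_absCont_PY H μ hx
    have h4 : (stdGaussian nr).map (fun z => H.mulVec x + z) (Prod.mk x ⁻¹' S) = 0 :=
      stdGaussian_add_absCont_volume nr (H.mulVec x) h3
    rw [Measure.map_apply (measurable_const_add _) (measurable_prodMk_left hS)] at h4
    exact h4
  rw [lintegral_congr_ae h0]
  simp

lemma klDivR_map_equiv {β γ : Type*} [MeasurableSpace β] [MeasurableSpace γ]
    (e : β ≃ᵐ γ) (μ ν : Measure β) [IsProbabilityMeasure μ] [IsProbabilityMeasure ν]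
    (h : μ ≪ ν) : klDivR (μ.map e) (ν.map e) = klDivR μ ν := by
  have hre : (fun x => ((μ.map e).rnDeriv (ν.map e) (e x))) =ᵐ[μ] μ.rnDeriv ν :=
    (e.measurableEmbedding.rnDeriv_map μ ν).filter_mono h.ae_le
  have hsm : AEStronglyMeasurable
      (fun y => Real.log (((μ.map e).rnDeriv (ν.map e)) y).toReal) (μ.map e) :=
    (Real.measurable_log.comp (Measure.measurable_rnDeriv _ _).ennreal_toReal)
      |>.aestronglyMeasurable
  rw [klDivR, klDivR, MeasureTheory.integral_map e.measurable.aemeasurable hsm]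
  exact integral_congr_ae (hre.mono fun x hx => congrArg (fun t => Real.log t.toReal) hx)

lemma mutualInfoJoint_map_equiv {β β' γ γ' : Type*} [MeasurableSpace β] [MeasurableSpace β']
    [MeasurableSpace γ] [MeasurableSpace γ'] (e₁ : β ≃ᵐ β') (e₂ : γ ≃ᵐ γ')
    (π : Measure (β × γ)) [IsProbabilityMeasure π]
    (hac : π ≪ (π.map Prod.fst).prod (π.map Prod.snd)) :
    mutualInfoJoint (π.map (e₁.prodCongr e₂)) = mutualInfoJoint π := by
  haveI : IsProbabilityMeasure (π.map Prod.fst) :=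
    Measure.isProbabilityMeasure_map measurable_fst.aemeasurable
  haveI : IsProbabilityMeasure (π.map Prod.snd) :=
    Measure.isProbabilityMeasure_map measurable_snd.aemeasurable
  haveI : IsProbabilityMeasure (π.map (e₁.prodCongr e₂)) :=
    Measure.isProbabilityMeasure_map (e₁.prodCongr e₂).measurable.aemeasurable
  have h1 : (π.map (e₁.prodCongr e₂)).map Prod.fst = (π.map Prod.fst).map e₁ := by
    rw [Measure.map_map measurable_fst (e₁.prodCongr e₂).measurable,
      Measure.map_map e₁.measurable measurable_fst]
    rfl
  have h2 : (π.map (e₁.prodCongr e₂)).map Prod.snd = (π.map Prod.snd).map e₂ := by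
    rw [Measure.map_map measurable_snd (e₁.prodCongr e₂).measurable,
      Measure.map_map e₂.measurable measurable_snd]
    rfl
  have h3 : ((π.map Prod.fst).map e₁).prod ((π.map Prod.snd).map e₂)
      = ((π.map Prod.fst).prod (π.map Prod.snd)).map (Prod.map e₁ e₂) :=
    Measure.map_prod_map _ _ e₁.measurable e₂.measurable
  have h4 : (Prod.map (⇑e₁) (⇑e₂)) = ⇑(e₁.prodCongr e₂) := by
    funext p; cases p; rfl
  rw [mutualInfoJoint, h1, h2, h3, h4, mutualInfoJoint]
  exact klDivR_map_equiv (e₁.prodCongr e₂) π _ hac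

/-- The flip `x ↦ c - x` as a measurable equivalence. -/
def subEquiv {ι : Type*} [Fintype ι] (c : ι → ℝ) : (ι → ℝ) ≃ᵐ (ι → ℝ) where
  toEquiv := ⟨fun x => c - x, fun x => c - x, fun x => by simp, fun x => by simp⟩
  measurable_toFun := measurable_const.sub measurable_id
  measurable_invFun := measurable_const.sub measurable_id

lemma subEquiv_apply {ι : Type*} [Fintype ι] (c x : ι → ℝ) : subEquiv c x = c - x := rfl

lemma jointLaw_flip (H : Matrix (Fin nr) (Fin nt) ℝ) (μ : Measure (Fin nt → ℝ))
    [IsProbabilityMeasure μ] (c : Fin nt → ℝ) :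
    jointLaw H (μ.map (fun x => c - x)) =
      (jointLaw H μ).map (Prod.map (fun x => c - x) (fun y => H.mulVec c - y)) := by
  have hf : Measurable fun x : Fin nt → ℝ => c - x := measurable_const.sub measurable_id
  have hg : Measurable fun y : Fin nr → ℝ => H.mulVec c - y :=
    measurable_const.sub measurable_id
  have hneg : Measurable fun z : Fin nr → ℝ => -z := measurable_neg
  rw [jointLaw, jointLaw]
  conv_lhs => rw [show stdGaussian nr = (stdGaussian nr).map (fun z : Fin nr → ℝ => -z) from
    (stdGaussian_map_neg nr).symm]
  rw [Measure.map_prod_map _ _ hf hneg,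
    Measure.map_map (measurable_jointMap H) (hf.prodMap hneg),
    Measure.map_map (hf.prodMap hg) (measurable_jointMap H)]
  congr 1
  funext p
  cases' p with x z
  simp only [Function.comp_apply, Prod.map_apply]
  refine Prod.ext rfl ?_
  simp only [Matrix.mulVec_sub]
  abel

lemma mutualInfoJoint_flip (H : Matrix (Fin nr) (Fin nt) ℝ) (μ : Measure (Fin nt → ℝ))
    [IsProbabilityMeasure μ] (c : Fin nt → ℝ) :
    mutualInfoJoint (jointLaw H (μ.map (fun x => c - x)))
      = mutualInfoJoint (jointLaw H μ) := by
  have h1 : (Prod.map (fun x : Fin nt → ℝ => c - x) (fun y : Fin nr → ℝ => H.mulVec c - y))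
      = ⇑((subEquiv c).prodCongr (subEquiv (H.mulVec c))) := by
    funext p; cases p; rfl
  rw [jointLaw_flip H μ c, h1]
  exact mutualInfoJoint_map_equiv _ _ _ (jointLaw_absCont H μ)

lemma measurableSet_box {n : ℕ} (A : ℝ) :
    MeasurableSet {x : Fin n → ℝ | ∀ k, x k ∈ Set.Icc (0 : ℝ) A} := by
  have : {x : Fin n → ℝ | ∀ k, x k ∈ Set.Icc (0 : ℝ) A}
      = ⋂ k, (fun x : Fin n → ℝ => x k) ⁻¹' Set.Icc (0 : ℝ) A := by
    ext x; simp
  rw [this]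
  exact MeasurableSet.iInter fun k => (measurable_pi_apply k) measurableSet_Icc

lemma measurable_sumAbs {n : ℕ} : Measurable fun x : Fin n → ℝ => ∑ k, |x k| :=
  Finset.measurable_sum Finset.univ fun k _ => (measurable_pi_apply k).abs

lemma integrable_sumAbs {n : ℕ} {A : ℝ} (μ : Measure (Fin n → ℝ)) [IsProbabilityMeasure μ]
    (hbox : ∀ᵐ x ∂μ, ∀ k, x k ∈ Set.Icc (0 : ℝ) A) :
    Integrable (fun x : Fin n → ℝ => ∑ k, |x k|) μ := by
  refine Integrable.mono' (integrable_const ((n : ℝ) * A)) measurable_sumAbs.aestronglyMeasurable ?_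
  filter_upwards [hbox] with x hx
  rw [Real.norm_eq_abs, abs_of_nonneg (Finset.sum_nonneg fun k _ => abs_nonneg _)]
  calc ∑ k, |x k| ≤ ∑ _k : Fin n, A :=
        Finset.sum_le_sum fun k _ => by rw [abs_of_nonneg (hx k).1]; exact (hx k).2
    _ = (n : ℝ) * A := by simp [Finset.sum_const, nsmul_eq_mul, Finset.card_univ]

lemma flip_box {n : ℕ} {A : ℝ} (μ : Measure (Fin n → ℝ))
    (hbox : ∀ᵐ x ∂μ, ∀ k, x k ∈ Set.Icc (0 : ℝ) A) :
    ∀ᵐ x ∂(μ.map (fun x => (fun _ => A) - x)), ∀ k, x k ∈ Set.Icc (0 : ℝ) A := by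
  have hf : Measurable fun x : Fin n → ℝ => (fun _ => A) - x :=
    measurable_const.sub measurable_id
  rw [MeasureTheory.ae_map_iff hf.aemeasurable (measurableSet_box A)]
  filter_upwards [hbox] with x hx k
  simp only [Pi.sub_apply, Set.mem_Icc]
  exact ⟨by linarith [(hx k).2], by linarith [(hx k).1]⟩

lemma flip_integral {n : ℕ} {A : ℝ} (μ : Measure (Fin n → ℝ)) [IsProbabilityMeasure μ]
    (hbox : ∀ᵐ x ∂μ, ∀ k, x k ∈ Set.Icc (0 : ℝ) A) :
    ∫ x, ∑ k, |x k| ∂(μ.map (fun x => (fun _ => A) - x))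
      = (n : ℝ) * A - ∫ x, ∑ k, |x k| ∂μ := by
  have hf : Measurable fun x : Fin n → ℝ => (fun _ => A) - x :=
    measurable_const.sub measurable_id
  have hint : Integrable (fun x : Fin n → ℝ => ∑ k, |x k|) μ := integrable_sumAbs μ hbox
  have hint2 : Integrable (fun x : Fin n → ℝ => ∑ k, x k) μ := by
    refine hint.congr ?_
    filter_upwards [hbox] with x hx
    exact Finset.sum_congr rfl fun k _ => abs_of_nonneg (hx k).1
  rw [MeasureTheory.integral_map hf.aemeasurable measurable_sumAbs.aestronglyMeasurable]
  have h1 : (fun x : Fin n → ℝ => ∑ k, |((fun _ : Fin n => A) - x) k|)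
      =ᵐ[μ] fun x => (n : ℝ) * A - ∑ k, x k := by
    filter_upwards [hbox] with x hx
    simp only [Pi.sub_apply]
    rw [Finset.sum_congr rfl fun k _ =>
        abs_of_nonneg (by linarith [(hx k).2] : (0 : ℝ) ≤ A - x k),
      Finset.sum_sub_distrib]
    simp [Finset.sum_const, nsmul_eq_mul, Finset.card_univ]
  rw [integral_congr_ae h1, integral_sub (integrable_const _) hint2, integral_const]
  have h2 : ∫ x, ∑ k, x k ∂μ = ∫ x, ∑ k, |x k| ∂μ := by
    refine integral_congr_ae ?_
    filter_upwards [hbox] with x hx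
    exact Finset.sum_congr rfl fun k _ => (abs_of_nonneg (hx k).1).symm
  rw [h2]
  simp

end Aux

end MimoOptical

/-- If `α > nt/2`, the average-power constraint is inactive:
`C_H(A, αA) = C_H(A, (nt/2)A)`. -/
theorem MimoOptical.capacity_avgPower_inactive
    (nt nr : ℕ) (hnr : 1 ≤ nr) (hntnr : nr < nt)
    (H : Matrix (Fin nr) (Fin nt) ℝ) (hrank : H.rank = nr)
    (A α : ℝ) (hA : 0 < A) (hα : 0 < α) (h : (nt : ℝ) / 2 < α) :
    MimoOptical.capacity H A (α * A) = MimoOptical.capacity H A ((nt : ℝ) / 2 * A) := by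
  unfold MimoOptical.capacity
  congr 1
  ext cval
  simp only [Set.mem_setOf_eq]
  constructor
  · rintro ⟨μ, ⟨hp, hbox, havg⟩, rfl⟩
    haveI := hp
    by_cases hE : (∫ x, ∑ k, |x k| ∂μ) ≤ (nt : ℝ) / 2 * A
    · exact ⟨μ, ⟨hp, hbox, hE⟩, rfl⟩
    · push_neg at hE
      refine ⟨μ.map (fun x => (fun _ => A) - x), ⟨?_, ?_, ?_⟩, ?_⟩
      · exact Measure.isProbabilityMeasure_map (measurable_const.sub measurable_id).aemeasurable
      · exact MimoOptical.flip_box μ hbox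
      · rw [MimoOptical.flip_integral μ hbox]
        linarith
      · exact (MimoOptical.mutualInfoJoint_flip H μ (fun _ => A)).symm
  · rintro ⟨μ, ⟨hp, hbox, havg⟩, rfl⟩
    refine ⟨μ, ⟨hp, hbox, havg.trans ?_⟩, rfl⟩
    exact mul_le_mul_of_nonneg_right h.le hA.le
end
end

section
/- For each U ∈ 𝒰 define B_U = {x ∈ ℝ^nt : x_i ∈ (0,A) for all i ∈ U, and x_j = A·g_{U,j} for all j ∈ U^c}. Then for all x̄ ∈ R(H) except a subset of nr-dimensional Lebesgue measure zero, every minimizer of ‖x‖₁ over the set S(x̄) = {x ∈ [0,A]^nt : Hx = x̄} lies in ⋃_{U∈𝒰} B_U. -/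
open MeasureTheory ProbabilityTheory Matrix Filter Topology
open scoped ENNReal NNReal BigOperators

noncomputable section

/-! ### Auxiliary lemmas for `minimizers_mem_BU` -/

namespace MimoOptical

section Aux

variable {nt nr : ℕ}

/-- The `j`-th column of `H`. -/
def colv (H : Matrix (Fin nr) (Fin nt) ℝ) (j : Fin nt) : Fin nr → ℝ := fun i => H i j

lemma mulVec_eq_sum_colv (H : Matrix (Fin nr) (Fin nt) ℝ) (x : Fin nt → ℝ) :
    H.mulVec x = ∑ j, x j • colv H j := by
  funext r
  simp only [Matrix.mulVec, dotProduct, Finset.sum_apply, Pi.smul_apply, colv,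
    smul_eq_mul]
  exact Finset.sum_congr rfl fun j _ => mul_comm _ _

/-- The exceptional null set. -/
def badSet (H : Matrix (Fin nr) (Fin nt) ℝ) (A : ℝ) : Set (Fin nr → ℝ) :=
  ⋃ (S : Finset (Fin nt)) (P : Finset (Fin nt))
    (_ : Submodule.span ℝ (colv H '' ↑S) ≠ ⊤),
    {x | x - A • ∑ j ∈ P, colv H j ∈ Submodule.span ℝ (colv H '' ↑S)}

lemma badSet_null (H : Matrix (Fin nr) (Fin nt) ℝ) (A : ℝ) : volume (badSet H A) = 0 := by
  refine measure_iUnion_null fun S => measure_iUnion_null fun P => measure_iUnion_null fun hS => ?_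
  have h1 : {x : Fin nr → ℝ | x - A • ∑ j ∈ P, colv H j ∈ Submodule.span ℝ (colv H '' ↑S)}
      = (fun x => x + -(A • ∑ j ∈ P, colv H j)) ⁻¹' (Submodule.span ℝ (colv H '' ↑S)) := by
    ext x; simp [sub_eq_add_neg]
  rw [h1, measure_preimage_add_right]
  exact Measure.addHaar_submodule _ _ hS

lemma coord_ev {A : ℝ} (hA : 0 < A) {c w : ℝ} (hc : c ∈ Set.Icc 0 A)
    (h0 : c = 0 → 0 ≤ w) (h1 : c = A → w ≤ 0) :
    ∀ᶠ t in 𝓝[>] (0:ℝ), c + t * w ∈ Set.Icc 0 A := by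
  have htend : Tendsto (fun t : ℝ => c + t * w) (𝓝[>] 0) (𝓝 c) := by
    have h : Tendsto (fun t : ℝ => c + t * w) (𝓝 0) (𝓝 (c + 0 * w)) :=
      (continuous_const.add (continuous_id.mul continuous_const)).tendsto 0
    simpa using h.mono_left nhdsWithin_le_nhds
  have hlow : ∀ᶠ t in 𝓝[>] (0:ℝ), 0 ≤ c + t * w := by
    rcases eq_or_lt_of_le hc.1 with h | h
    · filter_upwards [self_mem_nhdsWithin] with t ht
      have hw := h0 h.symm
      have : 0 ≤ t * w := mul_nonneg (le_of_lt ht) hw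
      linarith
    · exact (htend.eventually (eventually_gt_nhds h)).mono fun t ht => le_of_lt ht
  have hup : ∀ᶠ t in 𝓝[>] (0:ℝ), c + t * w ≤ A := by
    rcases eq_or_lt_of_le hc.2 with h | h
    · filter_upwards [self_mem_nhdsWithin] with t ht
      have hw := h1 h
      have h2 : t * w ≤ 0 := mul_nonpos_of_nonneg_of_nonpos (le_of_lt ht) hw
      linarith
    · exact (htend.eventually (eventually_lt_nhds h)).mono fun t ht => le_of_lt ht
  filter_upwards [hlow, hup] with t h2 h3
  exact ⟨h2, h3⟩

lemma sum_w_nonneg {H : Matrix (Fin nr) (Fin nt) ℝ} {A : ℝ} {xbar : Fin nr → ℝ}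
    {x w : Fin nt → ℝ}
    (hHx : H.mulVec x = xbar)
    (hmin : ∀ x' : Fin nt → ℝ, (∀ i, x' i ∈ Set.Icc (0 : ℝ) A) → H.mulVec x' = xbar →
      (∑ i, |x i|) ≤ ∑ i, |x' i|)
    (hx : ∀ i, x i ∈ Set.Icc (0 : ℝ) A)
    (hw : H.mulVec w = 0)
    (hfeas : ∀ᶠ t in 𝓝[>] (0:ℝ), ∀ i, x i + t * w i ∈ Set.Icc 0 A) :
    0 ≤ ∑ i, w i := by
  obtain ⟨t, ht, htpos⟩ := (hfeas.and self_mem_nhdsWithin).exists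
  set x' : Fin nt → ℝ := fun i => x i + t * w i with hx'
  have hx'e : x' = x + t • w := by funext i; simp [hx', smul_eq_mul]
  have hHx' : H.mulVec x' = xbar := by
    rw [hx'e, Matrix.mulVec_add, Matrix.mulVec_smul, hw, hHx]; simp
  have hle := hmin x' ht hHx'
  have e1 : (∑ i, |x i|) = ∑ i, x i := Finset.sum_congr rfl fun i _ => abs_of_nonneg (hx i).1
  have e2 : (∑ i, |x' i|) = ∑ i, x i + t * ∑ i, w i := by
    rw [Finset.mul_sum, ← Finset.sum_add_distrib]
    exact Finset.sum_congr rfl fun i _ => abs_of_nonneg (ht i).1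
  rw [e1, e2] at hle
  by_contra hneg
  push_neg at hneg
  have : t * ∑ i, w i < 0 := mul_neg_of_pos_of_neg htpos hneg
  linarith

variable {H : Matrix (Fin nr) (Fin nt) ℝ} {U : Finset (Fin nt)}

lemma isUnit_HU (hU : U ∈ goodSets H) : IsUnit (HU H U) := by
  obtain ⟨hcard, hind⟩ := hU
  rw [HU, dif_pos hcard, ← Matrix.linearIndependent_cols_iff_isUnit]
  have h2 := hind.comp (fun k : Fin nr => (U.orderIsoOfFin hcard k))
    (U.orderIsoOfFin hcard).toEquiv.injective
  exact h2

lemma HU_mulVec_inv (hU : U ∈ goodSets H) (y : Fin nr → ℝ) :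
    (HU H U).mulVec ((HU H U)⁻¹.mulVec y) = y := by
  rw [Matrix.mulVec_mulVec,
    Matrix.mul_nonsing_inv _ ((Matrix.isUnit_iff_isUnit_det _).1 (isUnit_HU hU)),
    Matrix.one_mulVec]

/-- The kernel vector `e_j - γ_{U,j}` (spread over the indices of `U`). -/
def kerVec (H : Matrix (Fin nr) (Fin nt) ℝ) (U : Finset (Fin nt)) (hcard : U.card = nr)
    (j : Fin nt) : Fin nt → ℝ :=
  fun i => (if i = j then 1 else 0)
    - ∑ k : Fin nr, if U.orderEmbOfFin hcard k = i
        then ((HU H U)⁻¹).mulVec (fun r => H r j) k else 0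

lemma kerVec_mulVec (hU : U ∈ goodSets H) (hcard : U.card = nr) (j : Fin nt) :
    H.mulVec (kerVec H U hcard j) = 0 := by
  funext r
  have hHUe : HU H U = H.submatrix id (fun i => U.orderEmbOfFin hcard i) := dif_pos hcard
  set γ : Fin nr → ℝ := ((HU H U)⁻¹).mulVec (fun r => H r j) with hγ
  have hinv : ∑ k, H r (U.orderEmbOfFin hcard k) * γ k = H r j := by
    have h := congrFun (HU_mulVec_inv hU (fun r => H r j)) r
    rw [← hγ] at h
    rw [← h]
    simp only [Matrix.mulVec, dotProduct]
    refine Finset.sum_congr rfl fun k _ => ?_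
    rw [hHUe]
    simp [Matrix.submatrix_apply]
  have e1 : H.mulVec (kerVec H U hcard j) r
      = (∑ i, H r i * (if i = j then 1 else 0))
        - ∑ i, H r i * (∑ k : Fin nr, if U.orderEmbOfFin hcard k = i then γ k else 0) := by
    simp [Matrix.mulVec, dotProduct, kerVec, mul_sub, Finset.sum_sub_distrib, hγ]
  have e2 : (∑ i, H r i * (if i = j then 1 else 0)) = H r j := by
    rw [Finset.sum_eq_single j (fun i _ hne => by rw [if_neg hne, mul_zero])
      (fun h => absurd (Finset.mem_univ _) h), if_pos rfl, mul_one]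
  have e3 : (∑ i, H r i * (∑ k : Fin nr, if U.orderEmbOfFin hcard k = i then γ k else 0))
      = ∑ k, H r (U.orderEmbOfFin hcard k) * γ k := by
    simp_rw [Finset.mul_sum]
    rw [Finset.sum_comm]
    refine Finset.sum_congr rfl fun k _ => ?_
    rw [Finset.sum_eq_single (U.orderEmbOfFin hcard k)
      (fun i _ hne => by rw [if_neg (Ne.symm hne), mul_zero])
      (fun h => absurd (Finset.mem_univ _) h), if_pos rfl]
  rw [e1, e2, e3, hinv, sub_self]
  rfl

lemma kerVec_sum (hcard : U.card = nr) (j : Fin nt) :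
    ∑ i, kerVec H U hcard j i = 1 - aUj H U j := by
  unfold kerVec
  rw [Finset.sum_sub_distrib]
  congr 1
  · rw [Finset.sum_eq_single j (fun i _ hne => if_neg hne)
      (fun h => absurd (Finset.mem_univ _) h), if_pos rfl]
  · rw [Finset.sum_comm]
    unfold aUj
    refine Finset.sum_congr rfl fun k _ => ?_
    rw [Finset.sum_eq_single (U.orderEmbOfFin hcard k)
      (fun i _ hne => if_neg (Ne.symm hne))
      (fun h => absurd (Finset.mem_univ _) h), if_pos rfl]

lemma kerVec_self (hcard : U.card = nr) {j : Fin nt} (hj : j ∉ U) :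
    kerVec H U hcard j j = 1 := by
  unfold kerVec
  rw [if_pos rfl, Finset.sum_eq_zero, sub_zero]
  intro k _
  exact if_neg (fun h : U.orderEmbOfFin hcard k = j => hj (h ▸ U.orderEmbOfFin_mem hcard k))

lemma kerVec_zero (hcard : U.card = nr) {j i : Fin nt} (hij : i ≠ j) (hiU : i ∉ U) :
    kerVec H U hcard j i = 0 := by
  unfold kerVec
  rw [if_neg hij, Finset.sum_eq_zero, sub_zero]
  intro k _
  exact if_neg (fun h : U.orderEmbOfFin hcard k = i => hiU (h ▸ U.orderEmbOfFin_mem hcard k))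

end Aux

end MimoOptical

/-- The set `B_U`: components in `U` lie in the open interval `(0,A)` and
components in `Uᶜ` equal `A g_{U,j}`. -/
def MimoOptical.BU {nt nr : ℕ} (H : Matrix (Fin nr) (Fin nt) ℝ) (A : ℝ)
    (U : Finset (Fin nt)) : Set (Fin nt → ℝ) :=
  { x | (∀ i ∈ U, x i ∈ Set.Ioo (0 : ℝ) A) ∧ ∀ j ∉ U, x j = A * MimoOptical.gUj H U j }

/-- For all `x̄ ∈ R(H)` outside a set of Lebesgue measure zero,
every minimizer of the `ℓ₁`-norm over `S(x̄) = {x ∈ [0,A]^nt : Hx = x̄}` lies in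
`⋃_{U ∈ 𝒰} B_U`. -/
theorem MimoOptical.minimizers_mem_BU
    (nt nr : ℕ) (hnr : 1 ≤ nr) (hntnr : nr < nt)
    (H : Matrix (Fin nr) (Fin nt) ℝ) (hrank : H.rank = nr)
    (A : ℝ) (hA : 0 < A)
    (htie : ∀ U ∈ MimoOptical.goodSets H, ∀ j ∉ U, MimoOptical.aUj H U j ≠ 1) :
    ∃ N : Set (Fin nr → ℝ), MeasureTheory.volume N = 0 ∧
      ∀ xbar ∈ MimoOptical.zonotope H A, xbar ∉ N →
        ∀ x : Fin nt → ℝ, (∀ i, x i ∈ Set.Icc (0 : ℝ) A) → H.mulVec x = xbar →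
          (∀ x' : Fin nt → ℝ, (∀ i, x' i ∈ Set.Icc (0 : ℝ) A) → H.mulVec x' = xbar →
            (∑ i, |x i|) ≤ ∑ i, |x' i|) →
          x ∈ ⋃ U ∈ MimoOptical.goodSets H, MimoOptical.BU H A U := by
  classical
  refine ⟨MimoOptical.badSet H A, MimoOptical.badSet_null H A, ?_⟩
  intro xbar _hzono hxbarN x hx hHx hmin
  set T : Finset (Fin nt) := Finset.univ.filter (fun i => x i ∈ Set.Ioo (0:ℝ) A) with hTdef
  have hmemT : ∀ i, i ∈ T ↔ x i ∈ Set.Ioo (0:ℝ) A := by intro i; simp [hTdef]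
  have hbd : ∀ j, j ∉ T → x j = 0 ∨ x j = A := by
    intro j hj
    rw [hmemT] at hj
    rcases eq_or_lt_of_le (hx j).1 with h | h
    · exact Or.inl h.symm
    rcases eq_or_lt_of_le (hx j).2 with h2 | h2
    · exact Or.inr h2
    exact absurd ⟨h, h2⟩ hj
  set P : Finset (Fin nt) := Finset.univ.filter (fun j => j ∉ T ∧ x j = A) with hPdef
  have hB : ∑ j ∈ Finset.univ.filter (fun i => ¬(x i ∈ Set.Ioo (0:ℝ) A)),
        x j • MimoOptical.colv H j = ∑ j ∈ P, A • MimoOptical.colv H j := by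
    have hPP : P = (Finset.univ.filter fun i => ¬(x i ∈ Set.Ioo (0:ℝ) A)).filter
        (fun j => x j = A) := by
      ext j
      simp [hPdef, hmemT, Finset.mem_filter, and_comm]
    conv_rhs => rw [hPP, Finset.sum_filter]
    refine Finset.sum_congr rfl fun j hj => ?_
    have hjT : j ∉ T := by
      rw [hmemT]
      exact (Finset.mem_filter.1 hj).2
    rcases hbd j hjT with h | h
    · rw [if_neg (fun hh => absurd (h.symm.trans hh) (ne_of_lt hA)), h, zero_smul]
    · rw [if_pos h, h]
  have hsum : xbar = (∑ j ∈ P, A • MimoOptical.colv H j)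
      + ∑ i ∈ T, x i • MimoOptical.colv H i := by
    rw [← hHx, MimoOptical.mulVec_eq_sum_colv,
      ← Finset.sum_filter_add_sum_filter_not Finset.univ (fun i => x i ∈ Set.Ioo (0:ℝ) A)
        (fun j => x j • MimoOptical.colv H j), hB, ← hTdef]
    exact add_comm _ _
  have hdecomp : xbar - A • ∑ j ∈ P, MimoOptical.colv H j
      ∈ Submodule.span ℝ (MimoOptical.colv H '' ↑T) := by
    rw [hsum, Finset.smul_sum, add_sub_cancel_left]
    exact Submodule.sum_mem _ fun i hi =>
      Submodule.smul_mem _ _ (Submodule.subset_span ⟨i, Finset.mem_coe.2 hi, rfl⟩)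
  have hspan : Submodule.span ℝ (MimoOptical.colv H '' ↑T) = ⊤ := by
    by_contra hne
    exact hxbarN (Set.mem_iUnion.2 ⟨T, Set.mem_iUnion.2 ⟨P, Set.mem_iUnion.2 ⟨hne, hdecomp⟩⟩⟩)
  -- extract a basis subset U ⊆ T
  obtain ⟨I, hIind, hImax⟩ :=
    exists_maximal_linearIndepOn ℝ (fun i : {i // i ∈ T} => MimoOptical.colv H i.1)
  have hIspan : Submodule.span ℝ ((fun i : {i // i ∈ T} => MimoOptical.colv H i.1) '' I) = ⊤ := by
    rw [eq_top_iff, ← hspan, Submodule.span_le]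
    rintro v ⟨i, hi, rfl⟩
    have hiT : i ∈ T := Finset.mem_coe.1 hi
    by_cases hmem : (⟨i, hiT⟩ : {i // i ∈ T}) ∈ I
    · exact Submodule.subset_span ⟨⟨i, hiT⟩, hmem, rfl⟩
    · obtain ⟨a, ha, hav⟩ := hImax ⟨i, hiT⟩ hmem
      have h2 := Submodule.smul_mem _ a⁻¹ hav
      rwa [smul_smul, inv_mul_cancel₀ ha, one_smul] at h2
  set U : Finset (Fin nt) := (T.attach.filter (fun i => i ∈ I)).image Subtype.val with hUdef
  have hUsub : U ⊆ T := by
    intro j hj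
    rw [hUdef, Finset.mem_image] at hj
    obtain ⟨a, _, rfl⟩ := hj
    exact a.2
  have hmemU : ∀ j : Fin nt, j ∈ U ↔ ∃ h : j ∈ T, (⟨j, h⟩ : {i // i ∈ T}) ∈ I := by
    intro j
    constructor
    · intro hj
      rw [hUdef, Finset.mem_image] at hj
      obtain ⟨a, ha, rfl⟩ := hj
      rw [Finset.mem_filter] at ha
      exact ⟨a.2, ha.2⟩
    · rintro ⟨h, hI⟩
      rw [hUdef, Finset.mem_image]
      exact ⟨⟨j, h⟩, Finset.mem_filter.2 ⟨T.mem_attach _, hI⟩, rfl⟩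
  have hind : LinearIndependent ℝ (fun j : {x_1 // x_1 ∈ U} => MimoOptical.colv H j.1) := by
    have hcomp := LinearIndependent.comp hIind
      (fun j : {x_1 // x_1 ∈ U} =>
        (⟨⟨j.1, hUsub j.2⟩, by
          obtain ⟨h, hI⟩ := (hmemU j.1).1 j.2
          exact hI⟩ : {y : {i // i ∈ T} // y ∈ I}))
      (fun j₁ j₂ h => Subtype.ext (congrArg (fun z : {y : {i // i ∈ T} // y ∈ I} => z.1.1) h))
    exact hcomp
  have hrangeU : Set.range (fun j : {x_1 // x_1 ∈ U} => MimoOptical.colv H j.1)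
      = (fun i : {i // i ∈ T} => MimoOptical.colv H i.1) '' I := by
    ext v
    constructor
    · rintro ⟨j, rfl⟩
      refine ⟨⟨j.1, hUsub j.2⟩, ?_, rfl⟩
      obtain ⟨h, hI⟩ := (hmemU j.1).1 j.2
      exact hI
    · rintro ⟨a, ha, rfl⟩
      exact ⟨⟨a.1, (hmemU a.1).2 ⟨a.2, ha⟩⟩, rfl⟩
  have hspanU : Submodule.span ℝ
      (Set.range (fun j : {x_1 // x_1 ∈ U} => MimoOptical.colv H j.1)) = ⊤ := by
    rw [hrangeU, hIspan]
  have hbasis : Module.Basis {x_1 // x_1 ∈ U} ℝ (Fin nr → ℝ) := Module.Basis.mk hind (le_of_eq hspanU.symm)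
  have hcard : U.card = nr := by
    have h1 := Module.finrank_eq_card_basis hbasis
    rw [Module.finrank_fin_fun, Fintype.card_coe] at h1
    exact h1.symm
  have hUgood : U ∈ MimoOptical.goodSets H := ⟨hcard, hind⟩
  -- a generic feasibility fact
  have key : ∀ v : Fin nt → ℝ, (∀ i, v i ≠ 0 → i ∈ T) →
      ∀ᶠ t in 𝓝[>] (0:ℝ), ∀ i, x i + t * v i ∈ Set.Icc 0 A := by
    intro v hv
    rw [eventually_all]
    intro i
    by_cases hvi : v i = 0
    · exact Filter.Eventually.of_forall fun t => by simpa [hvi] using hx i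
    · have hIoo : x i ∈ Set.Ioo (0:ℝ) A := (hmemT i).1 (hv i hvi)
      exact MimoOptical.coord_ev hA (hx i) (fun h => absurd h (ne_of_gt hIoo.1))
        (fun h => absurd h (ne_of_lt hIoo.2))
  -- T ⊆ U
  have hTU : T ⊆ U := by
    intro j hjT
    by_contra hjU
    have hane := htie U hUgood j hjU
    set w := MimoOptical.kerVec H U hcard j with hwdef
    have hw0 : H.mulVec w = 0 := MimoOptical.kerVec_mulVec hUgood hcard j
    have hsupp : ∀ i, w i ≠ 0 → i ∈ T := by
      intro i hwi
      by_cases hij : i = j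
      · exact hij ▸ hjT
      by_cases hiU : i ∈ U
      · exact hUsub hiU
      · exact absurd (MimoOptical.kerVec_zero hcard hij hiU) hwi
    have hsupp' : ∀ i, (-w) i ≠ 0 → i ∈ T := by
      intro i hwi
      exact hsupp i (fun h => hwi (by simp [h]))
    have h1 := MimoOptical.sum_w_nonneg hHx hmin hx hw0 (key w hsupp)
    have h2 := MimoOptical.sum_w_nonneg hHx hmin hx
      (by rw [Matrix.mulVec_neg, hw0, neg_zero]) (key (-w) hsupp')
    rw [MimoOptical.kerVec_sum] at h1
    have h2' : (0:ℝ) ≤ -(1 - MimoOptical.aUj H U j) := by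
      rw [← MimoOptical.kerVec_sum (H := H) hcard j, ← Finset.sum_neg_distrib]
      exact h2
    exact hane (by linarith)
  have hTeqU : T = U := Finset.Subset.antisymm hTU hUsub
  -- conclusion
  refine Set.mem_biUnion hUgood ⟨fun i hi => (hmemT i).1 (hTeqU ▸ hi), ?_⟩
  intro j hjU
  have hjT : j ∉ T := hTeqU ▸ hjU
  have hane := htie U hUgood j hjU
  set w := MimoOptical.kerVec H U hcard j with hwdef
  have hw0 : H.mulVec w = 0 := MimoOptical.kerVec_mulVec hUgood hcard j
  have hsupp : ∀ i, i ≠ j → w i ≠ 0 → i ∈ T := by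
    intro i hij hwi
    by_cases hiU : i ∈ U
    · exact hUsub hiU
    · exact absurd (MimoOptical.kerVec_zero hcard hij hiU) hwi
  rcases hbd j hjT with hxj | hxj
  · -- x j = 0 ; show a_{U,j} < 1
    have hlt : ¬ (1 < MimoOptical.aUj H U j) := by
      intro h1a
      have hfeas : ∀ᶠ t in 𝓝[>] (0:ℝ), ∀ i, x i + t * w i ∈ Set.Icc 0 A := by
        rw [eventually_all]
        intro i
        by_cases hij : i = j
        · subst hij
          refine MimoOptical.coord_ev hA (hx i) (fun _ => ?_)
            (fun h => absurd (hxj.symm.trans h) (ne_of_lt hA))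
          rw [hwdef, MimoOptical.kerVec_self hcard hjU]
          norm_num
        · by_cases hwi : w i = 0
          · exact Filter.Eventually.of_forall fun t => by simpa [hwi] using hx i
          · have hIoo : x i ∈ Set.Ioo (0:ℝ) A := (hmemT i).1 (hsupp i hij hwi)
            exact MimoOptical.coord_ev hA (hx i) (fun h => absurd h (ne_of_gt hIoo.1))
              (fun h => absurd h (ne_of_lt hIoo.2))
      have h1 := MimoOptical.sum_w_nonneg hHx hmin hx hw0 hfeas
      rw [MimoOptical.kerVec_sum] at h1
      linarith
    rw [MimoOptical.gUj, if_neg hlt, mul_zero]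
    exact hxj
  · -- x j = A ; show 1 < a_{U,j}
    have hgt : 1 < MimoOptical.aUj H U j := by
      rcases lt_trichotomy (MimoOptical.aUj H U j) 1 with h1a | h1a | h1a
      · exfalso
        have hfeas : ∀ᶠ t in 𝓝[>] (0:ℝ), ∀ i, x i + t * (-w) i ∈ Set.Icc 0 A := by
          rw [eventually_all]
          intro i
          by_cases hij : i = j
          · subst hij
            refine MimoOptical.coord_ev hA (hx i)
              (fun h => absurd (h.symm.trans hxj) (ne_of_lt hA)) (fun _ => ?_)
            have : w i = 1 := MimoOptical.kerVec_self hcard hjU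
            simp [this]
          · by_cases hwi : w i = 0
            · exact Filter.Eventually.of_forall fun t => by simpa [hwi] using hx i
            · have hIoo : x i ∈ Set.Ioo (0:ℝ) A := (hmemT i).1 (hsupp i hij hwi)
              exact MimoOptical.coord_ev hA (hx i) (fun h => absurd h (ne_of_gt hIoo.1))
                (fun h => absurd h (ne_of_lt hIoo.2))
        have h2 := MimoOptical.sum_w_nonneg hHx hmin hx
          (by rw [Matrix.mulVec_neg, hw0, neg_zero]) hfeas
        have h2' : (0:ℝ) ≤ -(1 - MimoOptical.aUj H U j) := by
          rw [← MimoOptical.kerVec_sum (H := H) hcard j, ← Finset.sum_neg_distrib]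
          exact h2
        linarith
      · exact absurd h1a hane
      · exact h1a
    rw [MimoOptical.gUj, if_pos hgt, mul_one]
    exact hxj
end
end

section
/- There exists a distribution P_X on [0,A]^nt satisfying E[‖X‖₁] ≤ αA that maximizes tr(Cov(HX)) over all such distributions and for which each component takes only the values 0 and A: P(X_i ∈ {0, A}) = 1 for every i = 1,…,nt. -/
open MeasureTheory ProbabilityTheory Matrix Filter Topology
open scoped ENNReal NNReal BigOperators

noncomputable section

namespace MimoOptical

variable {nt nr : ℕ}

section BinaryAux

variable {nt : ℕ}

/-- The binary corner point associated to a sign pattern `s`. -/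
def bvec (A : ℝ) (s : Fin nt → Bool) : Fin nt → ℝ := fun i => if s i then A else 0

/-- Product-Bernoulli weight of the pattern `s` at the point `x`. -/
def wf (A : ℝ) (s : Fin nt → Bool) (x : Fin nt → ℝ) : ℝ :=
  ∏ i, (if s i then x i / A else 1 - x i / A)

lemma sum_prod_bool (g : Fin nt → Bool → ℝ) :
    ∑ s : Fin nt → Bool, ∏ i, g i (s i) = ∏ i, (g i true + g i false) := by
  classical
  rw [← Fintype.prod_sum g]
  refine Finset.prod_congr rfl fun i _ => ?_
  simp

lemma sum_wf (A : ℝ) (x : Fin nt → ℝ) : ∑ s : Fin nt → Bool, wf A s x = 1 := by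
  classical
  unfold wf
  rw [sum_prod_bool (fun i b => if b then x i / A else 1 - x i / A)]
  refine Finset.prod_eq_one fun i _ => ?_
  rw [if_pos rfl, if_neg Bool.false_ne_true]
  ring

lemma sum_wf_mul_bvec {A : ℝ} (hA : A ≠ 0) (x : Fin nt → ℝ) (k : Fin nt) :
    ∑ s : Fin nt → Bool, wf A s x * bvec A s k = x k := by
  classical
  have h1 : ∀ s : Fin nt → Bool, wf A s x * bvec A s k
      = ∏ i, ((if s i then x i / A else 1 - x i / A) *
          (if i = k then (if s i then A else 0) else 1)) := by
    intro s
    rw [Finset.prod_mul_distrib]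
    congr 1
    rw [Finset.prod_ite_eq' Finset.univ k (fun i => if s i then A else (0:ℝ))]
    simp [bvec]
  rw [Finset.sum_congr rfl fun s _ => h1 s]
  rw [sum_prod_bool (fun i b => (if b then x i / A else 1 - x i / A) *
      (if i = k then (if b then A else 0) else 1))]
  rw [Finset.prod_eq_single k ?_ ?_]
  · rw [if_pos rfl, if_pos rfl, if_pos rfl, if_pos rfl, if_neg Bool.false_ne_true,
      if_neg Bool.false_ne_true]
    field_simp
    ring
  · intro i _ hik
    rw [if_pos rfl, if_neg Bool.false_ne_true, if_neg hik, if_neg hik]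
    ring
  · intro h
    exact absurd (Finset.mem_univ k) h

lemma sum_wf_smul_bvec {A : ℝ} (hA : A ≠ 0) (x : Fin nt → ℝ) :
    ∑ s : Fin nt → Bool, wf A s x • bvec A s = x := by
  funext k
  rw [Finset.sum_apply]
  simp only [Pi.smul_apply, smul_eq_mul]
  exact sum_wf_mul_bvec hA x k

lemma wf_nonneg {A : ℝ} (hA : 0 < A) {x : Fin nt → ℝ}
    (hx : ∀ i, x i ∈ Set.Icc (0:ℝ) A) (s : Fin nt → Bool) : 0 ≤ wf A s x := by
  refine Finset.prod_nonneg fun i _ => ?_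
  obtain ⟨h0, h1⟩ := hx i
  by_cases h : s i = true
  · rw [if_pos h]
    positivity
  · rw [if_neg h, sub_nonneg]
    exact div_le_one_of_le₀ h1 hA.le

lemma sum_wf_mul_lin {A : ℝ} (hA : A ≠ 0) (L : (Fin nt → ℝ) →ₗ[ℝ] ℝ) (x : Fin nt → ℝ) :
    ∑ s : Fin nt → Bool, wf A s x * L (bvec A s) = L x := by
  have h := congrArg L (sum_wf_smul_bvec hA x)
  rw [map_sum] at h
  simpa [smul_eq_mul] using h

lemma le_sum_wf_mul {A : ℝ} (hA : 0 < A) {x : Fin nt → ℝ}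
    (hx : ∀ i, x i ∈ Set.Icc (0:ℝ) A) {f : (Fin nt → ℝ) → ℝ}
    (hf : ConvexOn ℝ Set.univ f) :
    f x ≤ ∑ s : Fin nt → Bool, wf A s x * f (bvec A s) := by
  have h := hf.map_sum_le (t := Finset.univ) (w := fun s => wf A s x)
    (p := fun s => bvec A s) (fun s _ => wf_nonneg hA hx s)
    (by simpa using sum_wf A x) (fun s _ => Set.mem_univ _)
  rw [sum_wf_smul_bvec hA.ne' x] at h
  simpa [smul_eq_mul] using h

lemma convexOn_mulVec_sq {nr : ℕ} (H : Matrix (Fin nr) (Fin nt) ℝ) (i : Fin nr) :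
    ConvexOn ℝ Set.univ (fun x : Fin nt → ℝ => (H.mulVec x i) ^ 2) := by
  have h2 : ConvexOn ℝ Set.univ (fun y : ℝ => y ^ 2) := Even.convexOn_pow even_two
  have h := h2.comp_affineMap (((LinearMap.proj i).comp H.mulVecLin).toAffineMap)
  exact h

lemma continuous_mulVec_app {nr : ℕ} (H : Matrix (Fin nr) (Fin nt) ℝ) (i : Fin nr) :
    Continuous fun x : Fin nt → ℝ => H.mulVec x i := by
  simp only [Matrix.mulVec, dotProduct]
  exact continuous_finset_sum _ fun j _ => continuous_const.mul (continuous_apply j)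

lemma continuous_wf (A : ℝ) (s : Fin nt → Bool) :
    Continuous (wf A s : (Fin nt → ℝ) → ℝ) := by
  unfold wf
  refine continuous_finset_prod (Finset.univ : Finset (Fin nt)) fun i _ => ?_
  have hci : Continuous fun x : Fin nt → ℝ => x i := continuous_apply i
  cases h : s i
  · simpa only [h, if_neg Bool.false_ne_true] using
      (show Continuous fun x : Fin nt → ℝ => (1:ℝ) - x i / A from continuous_const.sub (hci.div_const A))
  · simpa only [h, ↓reduceIte] using hci.div_const A

lemma Admissible.integrable_of_continuous {A avg : ℝ} {ν : Measure (Fin nt → ℝ)}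
    (hν : Admissible nt A avg ν) {f : (Fin nt → ℝ) → ℝ} (hf : Continuous f) :
    Integrable f ν := by
  haveI := hν.1
  obtain ⟨C, hC⟩ := (isCompact_Icc (a := (0 : Fin nt → ℝ))
    (b := fun _ => A)).exists_bound_of_continuousOn hf.continuousOn
  refine Integrable.mono' (integrable_const C) hf.aestronglyMeasurable ?_
  filter_upwards [hν.2.1] with x hx
  exact hC x (Set.mem_Icc.2 ⟨fun k => (hx k).1, fun k => (hx k).2⟩)

/-- The discrete measure on binary corner points with weights `p`. -/
def binM (A : ℝ) (p : (Fin nt → Bool) → ℝ) : Measure (Fin nt → ℝ) :=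
  ∑ s : Fin nt → Bool, (ENNReal.ofReal (p s)) • Measure.dirac (bvec A s)

lemma binM_integral (A : ℝ) {p : (Fin nt → Bool) → ℝ} (hp : ∀ s, 0 ≤ p s)
    {f : (Fin nt → ℝ) → ℝ} (hf : Continuous f) :
    ∫ x, f x ∂(binM A p) = ∑ s : Fin nt → Bool, p s * f (bvec A s) := by
  rw [binM, integral_finset_sum_measure ?_]
  · refine Finset.sum_congr rfl fun s _ => ?_
    rw [integral_smul_measure, integral_dirac]
    simp [ENNReal.toReal_ofReal (hp s), smul_eq_mul]
  · intro s _
    refine Integrable.smul_measure ?_ ENNReal.ofReal_ne_top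
    refine ⟨hf.aestronglyMeasurable, ?_⟩
    rw [HasFiniteIntegral]
    rw [lintegral_dirac]
    exact ENNReal.coe_lt_top

lemma binM_apply_eq_one (A : ℝ) {p : (Fin nt → Bool) → ℝ} (hp : ∀ s, 0 ≤ p s)
    (hp1 : ∑ s : Fin nt → Bool, p s = 1) {E : Set (Fin nt → ℝ)} (hE : MeasurableSet E)
    (hmem : ∀ s, bvec A s ∈ E) : binM A p E = 1 := by
  rw [binM, Measure.finset_sum_apply]
  have h : ∀ s : Fin nt → Bool,
      (ENNReal.ofReal (p s) • Measure.dirac (bvec A s)) E = ENNReal.ofReal (p s) := by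
    intro s
    rw [Measure.smul_apply, Measure.dirac_apply' _ hE]
    simp [Set.indicator_of_mem (hmem s)]
  rw [Finset.sum_congr rfl fun s _ => h s]
  rw [← ENNReal.ofReal_sum_of_nonneg fun s _ => hp s, hp1, ENNReal.ofReal_one]

lemma binM_prob (A : ℝ) {p : (Fin nt → Bool) → ℝ} (hp : ∀ s, 0 ≤ p s)
    (hp1 : ∑ s : Fin nt → Bool, p s = 1) : IsProbabilityMeasure (binM A p) :=
  ⟨binM_apply_eq_one A hp hp1 MeasurableSet.univ fun _ => Set.mem_univ _⟩

lemma binM_ae (A : ℝ) (p : (Fin nt → Bool) → ℝ) {P : (Fin nt → ℝ) → Prop}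
    (hP : MeasurableSet {x | P x}) (h : ∀ s, P (bvec A s)) :
    ∀ᵐ x ∂(binM A p), P x := by
  rw [ae_iff, binM, Measure.finset_sum_apply]
  refine Finset.sum_eq_zero fun s _ => ?_
  have hPc : MeasurableSet {a : Fin nt → ℝ | ¬ P a} := hP.compl
  rw [Measure.smul_apply, Measure.dirac_apply' _ hPc]
  have : bvec A s ∉ {a : Fin nt → ℝ | ¬ P a} := fun hc => hc (h s)
  simp [Set.indicator_of_notMem this, h s]

end BinaryAux

lemma key_compare {nt nr : ℕ} (H : Matrix (Fin nr) (Fin nt) ℝ) {A avg : ℝ} (hA : 0 < A)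
    {ν : Measure (Fin nt → ℝ)} (hν : Admissible nt A avg ν) :
    ∃ q : (Fin nt → Bool) → ℝ, (∀ s, 0 ≤ q s) ∧ (∑ s : Fin nt → Bool, q s) = 1 ∧
      (∑ s : Fin nt → Bool, q s * ∑ k, bvec A s k) ≤ avg ∧
      traceCov H ν ≤ ∑ i, ((∑ s : Fin nt → Bool, q s * (H.mulVec (bvec A s) i) ^ 2)
        - (∑ s : Fin nt → Bool, q s * H.mulVec (bvec A s) i) ^ 2) := by
  classical
  haveI := hν.1
  set q : (Fin nt → Bool) → ℝ := fun s => ∫ x, wf A s x ∂ν with hqdef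
  have int_w : ∀ s, Integrable (wf A s) ν := fun s =>
    hν.integrable_of_continuous (continuous_wf A s)
  have hq0 : ∀ s, 0 ≤ q s := by
    intro s
    refine integral_nonneg_of_ae ?_
    filter_upwards [hν.2.1] with x hx
    exact wf_nonneg hA hx s
  have hswap : ∀ f : (Fin nt → ℝ) → ℝ,
      (∑ s : Fin nt → Bool, q s * f (bvec A s))
        = ∫ x, ∑ s : Fin nt → Bool, wf A s x * f (bvec A s) ∂ν := by
    intro f
    rw [integral_finset_sum _ fun s _ => (int_w s).mul_const _]
    exact Finset.sum_congr rfl fun s _ => (integral_mul_const _ _).symm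
  have hlin : ∀ L : (Fin nt → ℝ) →ₗ[ℝ] ℝ,
      (∑ s : Fin nt → Bool, q s * L (bvec A s)) = ∫ x, L x ∂ν := by
    intro L
    rw [hswap]
    exact integral_congr_ae (Filter.Eventually.of_forall fun x => sum_wf_mul_lin hA.ne' L x)
  have hq1 : (∑ s : Fin nt → Bool, q s) = 1 := by
    rw [hqdef, ← integral_finset_sum _ fun s _ => int_w s]
    simp [sum_wf]
  have hcoord : ∀ k : Fin nt, (∑ s : Fin nt → Bool, q s * bvec A s k) = ∫ x, x k ∂ν := by
    intro k
    have h := hlin (LinearMap.proj k)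
    simpa using h
  refine ⟨q, hq0, hq1, ?_, ?_⟩
  · have hint : ∀ k : Fin nt, Integrable (fun x : Fin nt → ℝ => x k) ν := fun k =>
      hν.integrable_of_continuous (continuous_apply k)
    calc (∑ s : Fin nt → Bool, q s * ∑ k, bvec A s k)
        = ∑ k, ∑ s : Fin nt → Bool, q s * bvec A s k := by
          rw [Finset.sum_comm]
          exact Finset.sum_congr rfl fun s _ => Finset.mul_sum _ _ _
      _ = ∑ k, ∫ x, x k ∂ν := Finset.sum_congr rfl fun k _ => hcoord k
      _ = ∫ x, ∑ k, x k ∂ν := (integral_finset_sum _ fun k _ => hint k).symm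
      _ = ∫ x, ∑ k, |x k| ∂ν := by
          refine integral_congr_ae ?_
          filter_upwards [hν.2.1] with x hx
          exact Finset.sum_congr rfl fun k _ => (abs_of_nonneg (hx k).1).symm
      _ ≤ avg := hν.2.2
  · rw [traceCov]
    refine Finset.sum_le_sum fun i _ => ?_
    have hlini : (∫ x, H.mulVec x i ∂ν)
        = ∑ s : Fin nt → Bool, q s * H.mulVec (bvec A s) i := by
      have h := hlin ((LinearMap.proj i).comp H.mulVecLin)
      simpa using h.symm
    have hsq : (∫ x, (H.mulVec x i) ^ 2 ∂ν)
        ≤ ∑ s : Fin nt → Bool, q s * (H.mulVec (bvec A s) i) ^ 2 := by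
      rw [hswap (fun v => (H.mulVec v i) ^ 2)]
      refine integral_mono_ae
        (hν.integrable_of_continuous ((continuous_mulVec_app H i).pow 2))
        (hν.integrable_of_continuous
          (continuous_finset_sum _ fun s _ => (continuous_wf A s).mul continuous_const)) ?_
      filter_upwards [hν.2.1] with x hx
      exact le_sum_wf_mul hA hx (convexOn_mulVec_sq H i)
    rw [hlini]
    exact sub_le_sub_right hsq _

end MimoOptical

/-- There exists a maximizer of `tr(Cov(HX))` over all admissible
input distributions whose components take only the values `0` and `A`. -/
theorem MimoOptical.exists_binary_traceCov_maximizer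
    (nt nr : ℕ) (hnr : 1 ≤ nr) (hntnr : nr < nt)
    (H : Matrix (Fin nr) (Fin nt) ℝ) (hrank : H.rank = nr)
    (A α : ℝ) (hA : 0 < A) (hα : 0 < α) :
    ∃ μ : Measure (Fin nt → ℝ), MimoOptical.Admissible nt A (α * A) μ ∧
      (∀ ν : Measure (Fin nt → ℝ), MimoOptical.Admissible nt A (α * A) ν →
        MimoOptical.traceCov H ν ≤ MimoOptical.traceCov H μ) ∧
      ∀ i : Fin nt, μ { x | x i = 0 ∨ x i = A } = 1 := by
  classical
  open MimoOptical in
  set F : ((Fin nt → Bool) → ℝ) → ℝ := fun p =>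
    ∑ i, ((∑ s : Fin nt → Bool, p s * (H.mulVec (bvec A s) i) ^ 2)
      - (∑ s : Fin nt → Bool, p s * H.mulVec (bvec A s) i) ^ 2) with hF
  set K : Set ((Fin nt → Bool) → ℝ) :=
    {p | (∀ s, 0 ≤ p s) ∧ (∑ s : Fin nt → Bool, p s) = 1 ∧
      (∑ s : Fin nt → Bool, p s * ∑ k, bvec A s k) ≤ α * A} with hK
  have hbox : ∀ (s : Fin nt → Bool) (k : Fin nt), bvec A s k ∈ Set.Icc (0:ℝ) A := by
    intro s k
    by_cases h : s k = true
    · rw [show bvec A s k = if s k then A else 0 from rfl, if_pos h]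
      exact ⟨hA.le, le_refl A⟩
    · rw [show bvec A s k = if s k then A else 0 from rfl, if_neg h]
      exact ⟨le_refl 0, hA.le⟩
  -- compactness of K
  have hKclosed : IsClosed K := by
    rw [hK]
    simp only [Set.setOf_and]
    refine IsClosed.inter ?_ (IsClosed.inter ?_ ?_)
    · rw [Set.setOf_forall]
      exact isClosed_iInter fun s =>
        isClosed_le continuous_const (continuous_apply s)
    · exact isClosed_eq (continuous_finset_sum _ fun s _ => continuous_apply s)
        continuous_const
    · exact isClosed_le (continuous_finset_sum _ fun s _ =>
        (continuous_apply s).mul continuous_const) continuous_const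
  have hKsub : K ⊆ Set.Icc (0 : (Fin nt → Bool) → ℝ) 1 := by
    intro p hp
    refine Set.mem_Icc.2 ⟨fun s => hp.1 s, fun s => ?_⟩
    calc p s ≤ ∑ s' : Fin nt → Bool, p s' :=
          Finset.single_le_sum (fun s' _ => hp.1 s') (Finset.mem_univ s)
      _ = 1 := hp.2.1
  have hKcomp : IsCompact K := IsCompact.of_isClosed_subset isCompact_Icc hKclosed hKsub
  have hKne : K.Nonempty := by
    refine ⟨fun s => if s = (fun _ => false) then (1:ℝ) else 0, ?_, ?_, ?_⟩
    · intro s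
      dsimp only
      split <;> norm_num
    · rw [Finset.sum_ite_eq' Finset.univ (fun _ => false) (fun _ => (1:ℝ))]
      simp
    · have h0 : ∀ k : Fin nt, bvec A (fun _ => false) k = 0 := fun k =>
        if_neg Bool.false_ne_true
      have : ∀ s : Fin nt → Bool,
          (if s = (fun _ => false) then (1:ℝ) else 0) * ∑ k, bvec A s k
          = if s = (fun _ => false) then (∑ k, bvec A s k) else 0 := by
        intro s; split <;> ring
      rw [Finset.sum_congr rfl fun s _ => this s,
        Finset.sum_ite_eq' Finset.univ (fun _ => false) (fun s => ∑ k, bvec A s k)]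
      simp only [Finset.mem_univ, if_true]
      rw [Finset.sum_congr rfl fun k _ => h0 k]
      simp
      positivity
  have hFcont : Continuous F := by
    rw [hF]
    refine continuous_finset_sum _ fun i _ => Continuous.sub ?_ (Continuous.pow ?_ 2)
    · exact continuous_finset_sum _ fun s _ => (continuous_apply s).mul continuous_const
    · exact continuous_finset_sum _ fun s _ => (continuous_apply s).mul continuous_const
  obtain ⟨p, hpK, hpmax⟩ := hKcomp.exists_isMaxOn hKne hFcont.continuousOn
  have hp0 : ∀ s, 0 ≤ p s := hpK.1
  have hp1 : (∑ s : Fin nt → Bool, p s) = 1 := hpK.2.1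
  -- the candidate measure
  have htrace : ∀ p' : (Fin nt → Bool) → ℝ, (∀ s, 0 ≤ p' s) →
      traceCov H (binM A p') = F p' := by
    intro p' hp'
    rw [traceCov, hF]
    refine Finset.sum_congr rfl fun i _ => ?_
    rw [binM_integral A hp' (f := fun x => (H.mulVec x i) ^ 2) ((continuous_mulVec_app H i).pow 2),
      binM_integral A hp' (continuous_mulVec_app H i)]
  have hadm : Admissible nt A (α * A) (binM A p) := by
    refine ⟨binM_prob A hp0 hp1, ?_, ?_⟩
    · refine binM_ae A p ?_ fun s k => hbox s k
      rw [Set.setOf_forall]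
      exact MeasurableSet.iInter fun k =>
        measurable_pi_apply k measurableSet_Icc
    · rw [binM_integral A hp0 (continuous_finset_sum _ fun k _ => (continuous_apply k).abs)]
      have habs : ∀ s : Fin nt → Bool, (∑ k, |bvec A s k|) = ∑ k, bvec A s k := fun s =>
        Finset.sum_congr rfl fun k _ => abs_of_nonneg (hbox s k).1
      calc (∑ s : Fin nt → Bool, p s * ∑ k, |bvec A s k|)
          = ∑ s : Fin nt → Bool, p s * ∑ k, bvec A s k :=
            Finset.sum_congr rfl fun s _ => by rw [habs s]
        _ ≤ α * A := hpK.2.2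
  refine ⟨binM A p, hadm, ?_, ?_⟩
  · intro ν hν
    obtain ⟨qv, hqv0, hqv1, hqvp, hqvle⟩ := key_compare H hA hν
    have hqvK : qv ∈ K := ⟨hqv0, hqv1, hqvp⟩
    calc traceCov H ν
        ≤ F qv := hqvle
      _ ≤ F p := hpmax hqvK
      _ = traceCov H (binM A p) := (htrace p hp0).symm
  · intro i
    refine binM_apply_eq_one A hp0 hp1 ?_ fun s => ?_
    · rw [Set.setOf_or]
      have h0 : MeasurableSet ((fun x : Fin nt → ℝ => x i) ⁻¹' {0}) :=
        measurable_pi_apply i (measurableSet_singleton 0)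
      have h1 : MeasurableSet ((fun x : Fin nt → ℝ => x i) ⁻¹' {A}) :=
        measurable_pi_apply i (measurableSet_singleton A)
      exact MeasurableSet.union h0 h1
    · by_cases h : s i = true
      · exact Or.inr (by rw [show bvec A s i = if s i then A else 0 from rfl, if_pos h])
      · exact Or.inl (by rw [show bvec A s i = if s i then A else 0 from rfl, if_neg h])
end
end
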